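/- If V : ℝ₊ → ℝ₊ is non-decreasing and measurable with all required integrals finite, then for each a ∈ ℝ, σ > 0, the map x ↦ x² + β ∫_0^∞ [exp(-(v - a x)²/(2σ²)) + exp(-(v + a x)²/(2σ²))] V(v) dv is non-decreasing on [0, ∞), for any β ≥ 0. -/

import Mathlib

open MeasureTheory Set

-- product of cosh rearrangement inequality
lemma aux_cosh_mul_cosh_le (u v c d : ℝ) (hu : 0 ≤ u) (huv : u ≤ v) (hc : 0 ≤ c) (hcd : c ≤ d) :
    Real.cosh (u*d) * Real.cosh (v*c) ≤ Real.cosh (u*c) * Real.cosh (v*d) := by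
  have hprod : ∀ x y : ℝ, Real.cosh x * Real.cosh y = (Real.cosh (x+y) + Real.cosh (x-y))/2 := by
    intro x y; rw [Real.cosh_add, Real.cosh_sub]; ring
  rw [hprod, hprod]
  have h1 : Real.cosh (u*d + v*c) ≤ Real.cosh (u*c + v*d) := by
    rw [Real.cosh_le_cosh]
    have h0 : (0:ℝ) ≤ d := hc.trans hcd
    have hv0 : (0:ℝ) ≤ v := hu.trans huv
    rw [abs_of_nonneg (by nlinarith [mul_nonneg hu h0, mul_nonneg hv0 hc]),
      abs_of_nonneg (by nlinarith [mul_nonneg hu hc, mul_nonneg hv0 h0])]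
    nlinarith
  have h2 : Real.cosh (u*d - v*c) ≤ Real.cosh (u*c - v*d) := by
    rw [Real.cosh_le_cosh]
    have h0 : (0:ℝ) ≤ d := hc.trans hcd
    have hv0 : (0:ℝ) ≤ v := hu.trans huv
    rw [abs_sub_comm (u*c) (v*d),
      abs_of_nonneg (show (0:ℝ) ≤ v*d - u*c by
        nlinarith [mul_le_mul_of_nonneg_right huv hc, mul_le_mul_of_nonneg_left hcd hv0])]
    rw [abs_le]
    refine ⟨by nlinarith [mul_le_mul_of_nonneg_left hcd (add_nonneg hu hv0)],
      by nlinarith [mul_le_mul_of_nonneg_right huv (add_nonneg hc h0)]⟩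
  linarith

-- translation of set integral
lemma aux_shift_Ioi (f : ℝ → ℝ) (m : ℝ) :
    ∫ v in Ioi (0:ℝ), f (v - m) = ∫ u in Ioi (-m), f u := by
  have key : ∀ v : ℝ, (Ioi (0:ℝ)).indicator (fun v => f (v - m)) v
      = (Ioi (-m)).indicator f (v - m) := by
    intro v
    by_cases hv : 0 < v
    · rw [Set.indicator_of_mem (by exact hv), Set.indicator_of_mem (by simp [mem_Ioi]; linarith)]
    · rw [Set.indicator_of_notMem (by exact hv),
        Set.indicator_of_notMem (by simp [mem_Ioi]; linarith)]
  rw [← integral_indicator measurableSet_Ioi, ← integral_indicator measurableSet_Ioi]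
  calc ∫ v, (Ioi (0:ℝ)).indicator (fun v => f (v - m)) v
      = ∫ v, (Ioi (-m)).indicator f (v - m) := by simp_rw [key]
    _ = ∫ v, (Ioi (-m)).indicator f v := integral_sub_right_eq_self _ m



-- the kernel in cosh form
lemma aux_kernel_eq (σ : ℝ) (hσ : 0 < σ) (m v : ℝ) :
    Real.exp (-(v - m)^2/(2*σ^2)) + Real.exp (-(v + m)^2/(2*σ^2))
      = 2 * Real.exp (-v^2/(2*σ^2)) * (Real.exp (-m^2/(2*σ^2)) * Real.cosh (v*m/σ^2)) := by
  have hσ' : σ ≠ 0 := hσ.ne'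
  have h1 : -(v - m)^2/(2*σ^2) = -v^2/(2*σ^2) + (-m^2/(2*σ^2)) + v*m/σ^2 := by
    field_simp; ring
  have h2 : -(v + m)^2/(2*σ^2) = -v^2/(2*σ^2) + (-m^2/(2*σ^2)) + -(v*m/σ^2) := by
    field_simp; ring
  rw [h1, h2, Real.cosh_eq, Real.exp_add, Real.exp_add, Real.exp_add, Real.exp_add]
  ring

-- integrability of shifted gaussians
lemma aux_integrable_gauss (σ : ℝ) (hσ : 0 < σ) (m : ℝ) :
    Integrable (fun v : ℝ => Real.exp (-(v - m)^2/(2*σ^2))) := by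
  have hb : (0:ℝ) < 1/(2*σ^2) := by positivity
  have h := (integrable_exp_neg_mul_sq hb).comp_sub_right m
  have heq : (fun v : ℝ => Real.exp (-(1/(2*σ^2)) * (v - m)^2))
      = fun v : ℝ => Real.exp (-(v - m)^2/(2*σ^2)) := by
    funext v; congr 1; ring
  rwa [heq] at h

lemma aux_integrable_gauss' (σ : ℝ) (hσ : 0 < σ) (m : ℝ) :
    Integrable (fun v : ℝ => Real.exp (-(v + m)^2/(2*σ^2))) := by
  have h := aux_integrable_gauss σ hσ (-m)
  simpa only [sub_neg_eq_add] using h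

lemma aux_integrable_kernel (σ : ℝ) (hσ : 0 < σ) (m : ℝ) :
    Integrable (fun v : ℝ =>
      Real.exp (-(v - m)^2/(2*σ^2)) + Real.exp (-(v + m)^2/(2*σ^2))) :=
  (aux_integrable_gauss σ hσ m).add (aux_integrable_gauss' σ hσ m)

-- total mass of the folded kernel is independent of the center
lemma aux_mass (σ : ℝ) (hσ : 0 < σ) (m : ℝ) :
    ∫ v in Ioi (0:ℝ),
      (Real.exp (-(v - m)^2/(2*σ^2)) + Real.exp (-(v + m)^2/(2*σ^2)))
    = ∫ u : ℝ, Real.exp (-u^2/(2*σ^2)) := by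
  set f : ℝ → ℝ := fun u => Real.exp (-u^2/(2*σ^2)) with hf
  have hfint : Integrable f := by
    have h := aux_integrable_gauss σ hσ 0
    simpa using h
  have hfeven : ∀ x : ℝ, f (-x) = f x := by intro x; simp [hf]
  rw [MeasureTheory.integral_add
    ((aux_integrable_gauss σ hσ m).integrableOn)
    ((aux_integrable_gauss' σ hσ m).integrableOn)]
  have e1 : ∫ v in Ioi (0:ℝ), Real.exp (-(v - m)^2/(2*σ^2)) = ∫ u in Ioi (-m), f u :=
    aux_shift_Ioi f m
  have e2 : ∫ v in Ioi (0:ℝ), Real.exp (-(v + m)^2/(2*σ^2)) = ∫ u in Iic (-m), f u := by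
    have h1 : ∫ v in Ioi (0:ℝ), Real.exp (-(v + m)^2/(2*σ^2)) = ∫ u in Ioi m, f u := by
      have h := aux_shift_Ioi f (-m)
      simp only [sub_neg_eq_add, neg_neg] at h
      exact h
    have h2 : ∫ u in Ioi m, f u = ∫ u in Ioi m, f (-u) := by
      refine setIntegral_congr_fun measurableSet_Ioi (fun u _ => ?_)
      rw [hfeven]
    rw [h1, h2, integral_comp_neg_Ioi]
  rw [e1, e2, add_comm]
  exact intervalIntegral.integral_Iic_add_Ioi hfint.integrableOn hfint.integrableOn

-- the crossing point
lemma aux_crossing (σ : ℝ) (hσ : 0 < σ) (c d : ℝ) (hc : 0 ≤ c) (hcd : c < d) :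
    ∃ v₀ : ℝ, 0 ≤ v₀ ∧
      Real.exp (-d^2/(2*σ^2)) * Real.cosh (v₀*d/σ^2)
        = Real.exp (-c^2/(2*σ^2)) * Real.cosh (v₀*c/σ^2) := by
  have hτ0 : (0:ℝ) < σ^2 := by positivity
  have hg : Continuous (fun v : ℝ =>
      Real.exp (-d^2/(2*σ^2)) * Real.cosh (v*d/σ^2)
        - Real.exp (-c^2/(2*σ^2)) * Real.cosh (v*c/σ^2)) := by fun_prop
  set g : ℝ → ℝ := fun v =>
    Real.exp (-d^2/(2*σ^2)) * Real.cosh (v*d/σ^2)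
      - Real.exp (-c^2/(2*σ^2)) * Real.cosh (v*c/σ^2) with hgdef
  set v₁ : ℝ := (σ^2 * Real.log 2 + (d^2 - c^2)/2)/(d - c) with hv₁
  have hd0 : (0:ℝ) ≤ d := hc.trans hcd.le
  have hdc : (0:ℝ) < d - c := by linarith
  have hlog2 : (0:ℝ) ≤ Real.log 2 := Real.log_nonneg one_le_two
  have hv₁0 : 0 ≤ v₁ := by
    apply div_nonneg _ hdc.le
    nlinarith
  have hg0 : g 0 ≤ 0 := by
    simp only [hgdef, zero_mul, zero_div, Real.cosh_zero, mul_one]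
    have h2σ : (0:ℝ) < 2*σ^2 := by positivity
    have : -d^2/(2*σ^2) ≤ -c^2/(2*σ^2) := (div_le_div_iff_of_pos_right h2σ).mpr (by nlinarith)
    have := Real.exp_le_exp.mpr this
    linarith
  have hg1 : 0 ≤ g v₁ := by
    have hv₁eq : v₁ * (d - c) = σ^2 * Real.log 2 + (d^2 - c^2)/2 := by
      rw [hv₁]; field_simp
    have hcoshlb : Real.exp (v₁*d/σ^2) / 2 ≤ Real.cosh (v₁*d/σ^2) := by
      rw [Real.cosh_eq]; linarith [(Real.exp_pos (-(v₁*d/σ^2))).le]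
    have hcoshub : Real.cosh (v₁*c/σ^2) ≤ Real.exp (v₁*c/σ^2) := by
      rw [Real.cosh_eq]
      have hx : (0:ℝ) ≤ v₁*c/σ^2 := by positivity
      have := Real.exp_le_exp.mpr (show -(v₁*c/σ^2) ≤ v₁*c/σ^2 by linarith)
      linarith
    have h1 : Real.exp (-d^2/(2*σ^2) + v₁*d/σ^2)
        ≤ 2 * (Real.exp (-d^2/(2*σ^2)) * Real.cosh (v₁*d/σ^2)) := by
      rw [Real.exp_add]
      nlinarith [mul_le_mul_of_nonneg_left hcoshlb (Real.exp_pos (-d^2/(2*σ^2))).le]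
    have h2 : Real.exp (-c^2/(2*σ^2)) * Real.cosh (v₁*c/σ^2)
        ≤ Real.exp (-c^2/(2*σ^2) + v₁*c/σ^2) := by
      rw [Real.exp_add]
      nlinarith [mul_le_mul_of_nonneg_left hcoshub (Real.exp_pos (-c^2/(2*σ^2))).le]
    have hkey : 2 * Real.exp (-c^2/(2*σ^2) + v₁*c/σ^2)
        ≤ Real.exp (-d^2/(2*σ^2) + v₁*d/σ^2) := by
      nth_rewrite 1 [show (2:ℝ) = Real.exp (Real.log 2) from (Real.exp_log two_pos).symm]
      rw [← Real.exp_add]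
      apply Real.exp_le_exp.mpr
      rw [← sub_nonneg]
      have expand : (-d^2/(2*σ^2) + v₁*d/σ^2) - (Real.log 2 + (-c^2/(2*σ^2) + v₁*c/σ^2))
          = (v₁*(d-c) - (σ^2*Real.log 2 + (d^2-c^2)/2))/σ^2 := by
        field_simp; ring
      rw [expand, hv₁eq, sub_self, zero_div]
    simp only [hgdef]
    linarith
  obtain ⟨v₀, hv₀mem, hv₀⟩ := intermediate_value_Icc hv₁0 hg.continuousOn
    (⟨hg0, hg1⟩ : (0:ℝ) ∈ Icc (g 0) (g v₁))
  refine ⟨v₀, hv₀mem.1, ?_⟩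
  simp only [hgdef] at hv₀
  linarith

lemma aux_key (σ : ℝ) (hσ : 0 < σ) (V : ℝ → ℝ) (hV_mono : MonotoneOn V (Set.Ici 0))
    (c d : ℝ) (hc : 0 ≤ c) (hcd : c ≤ d)
    (hic : IntegrableOn (fun v =>
      (Real.exp (-(v - c) ^ 2 / (2 * σ ^ 2)) + Real.exp (-(v + c) ^ 2 / (2 * σ ^ 2))) * V v) (Set.Ioi 0))
    (hid : IntegrableOn (fun v =>
      (Real.exp (-(v - d) ^ 2 / (2 * σ ^ 2)) + Real.exp (-(v + d) ^ 2 / (2 * σ ^ 2))) * V v) (Set.Ioi 0)) :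
    ∫ v in Set.Ioi (0:ℝ),
        (Real.exp (-(v - c) ^ 2 / (2 * σ ^ 2)) + Real.exp (-(v + c) ^ 2 / (2 * σ ^ 2))) * V v
      ≤ ∫ v in Set.Ioi (0:ℝ),
        (Real.exp (-(v - d) ^ 2 / (2 * σ ^ 2)) + Real.exp (-(v + d) ^ 2 / (2 * σ ^ 2))) * V v := by
  rcases eq_or_lt_of_le hcd with rfl | hlt
  · exact le_refl _
  have hτ0 : (0:ℝ) < σ^2 := by positivity
  obtain ⟨v₀, hv₀0, heq⟩ := aux_crossing σ hσ c d hc hlt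
  -- notation
  set Kc : ℝ → ℝ := fun v =>
    Real.exp (-(v - c) ^ 2 / (2 * σ ^ 2)) + Real.exp (-(v + c) ^ 2 / (2 * σ ^ 2)) with hKc
  set Kd : ℝ → ℝ := fun v =>
    Real.exp (-(v - d) ^ 2 / (2 * σ ^ 2)) + Real.exp (-(v + d) ^ 2 / (2 * σ ^ 2)) with hKd
  have hkc : IntegrableOn Kc (Ioi 0) := (aux_integrable_kernel σ hσ c).integrableOn
  have hkd : IntegrableOn Kd (Ioi 0) := (aux_integrable_kernel σ hσ d).integrableOn
  have hic' : IntegrableOn (fun v => Kc v * V v) (Ioi 0) := hic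
  have hid' : IntegrableOn (fun v => Kd v * V v) (Ioi 0) := hid
  -- G-level comparisons
  have hGge : ∀ v, v₀ ≤ v →
      Real.exp (-c^2/(2*σ^2)) * Real.cosh (v*c/σ^2)
        ≤ Real.exp (-d^2/(2*σ^2)) * Real.cosh (v*d/σ^2) := by
    intro v hv
    have hcm := aux_cosh_mul_cosh_le v₀ v (c/σ^2) (d/σ^2) hv₀0 hv
      (div_nonneg hc hτ0.le) (by gcongr)
    simp only [← mul_div_assoc] at hcm
    have hEcA : 0 < Real.exp (-c^2/(2*σ^2)) * Real.cosh (v₀*c/σ^2) := by positivity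
    rw [← mul_le_mul_iff_right₀ hEcA]
    calc Real.exp (-c^2/(2*σ^2)) * Real.cosh (v₀*c/σ^2)
          * (Real.exp (-c^2/(2*σ^2)) * Real.cosh (v*c/σ^2))
        = Real.exp (-c^2/(2*σ^2)) * Real.exp (-d^2/(2*σ^2))
          * (Real.cosh (v₀*d/σ^2) * Real.cosh (v*c/σ^2)) := by rw [← heq]; ring
      _ ≤ Real.exp (-c^2/(2*σ^2)) * Real.exp (-d^2/(2*σ^2))
          * (Real.cosh (v₀*c/σ^2) * Real.cosh (v*d/σ^2)) :=
          mul_le_mul_of_nonneg_left hcm (by positivity)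
      _ = Real.exp (-c^2/(2*σ^2)) * Real.cosh (v₀*c/σ^2)
          * (Real.exp (-d^2/(2*σ^2)) * Real.cosh (v*d/σ^2)) := by ring
  have hGle : ∀ v, 0 ≤ v → v ≤ v₀ →
      Real.exp (-d^2/(2*σ^2)) * Real.cosh (v*d/σ^2)
        ≤ Real.exp (-c^2/(2*σ^2)) * Real.cosh (v*c/σ^2) := by
    intro v hv0 hv
    have hcm := aux_cosh_mul_cosh_le v v₀ (c/σ^2) (d/σ^2) hv0 hv
      (div_nonneg hc hτ0.le) (by gcongr)
    simp only [← mul_div_assoc] at hcm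
    have hEdB : 0 < Real.exp (-d^2/(2*σ^2)) * Real.cosh (v₀*d/σ^2) := by positivity
    rw [← mul_le_mul_iff_right₀ hEdB]
    calc Real.exp (-d^2/(2*σ^2)) * Real.cosh (v₀*d/σ^2)
          * (Real.exp (-d^2/(2*σ^2)) * Real.cosh (v*d/σ^2))
        = Real.exp (-c^2/(2*σ^2)) * Real.exp (-d^2/(2*σ^2))
          * (Real.cosh (v*d/σ^2) * Real.cosh (v₀*c/σ^2)) := by rw [heq]; ring
      _ ≤ Real.exp (-c^2/(2*σ^2)) * Real.exp (-d^2/(2*σ^2))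
          * (Real.cosh (v*c/σ^2) * Real.cosh (v₀*d/σ^2)) :=
          mul_le_mul_of_nonneg_left hcm (by positivity)
      _ = Real.exp (-d^2/(2*σ^2)) * Real.cosh (v₀*d/σ^2)
          * (Real.exp (-c^2/(2*σ^2)) * Real.cosh (v*c/σ^2)) := by ring
  -- kernel-level comparisons
  have hsign_ge : ∀ v, v₀ ≤ v → Kc v ≤ Kd v := by
    intro v hv
    calc Kc v = 2 * Real.exp (-v^2/(2*σ^2))
          * (Real.exp (-c^2/(2*σ^2)) * Real.cosh (v*c/σ^2)) := by
          simp only [hKc]; exact aux_kernel_eq σ hσ c v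
      _ ≤ 2 * Real.exp (-v^2/(2*σ^2))
          * (Real.exp (-d^2/(2*σ^2)) * Real.cosh (v*d/σ^2)) :=
          mul_le_mul_of_nonneg_left (hGge v hv) (by positivity)
      _ = Kd v := by simp only [hKd]; exact (aux_kernel_eq σ hσ d v).symm
  have hsign_le : ∀ v, 0 ≤ v → v ≤ v₀ → Kd v ≤ Kc v := by
    intro v hv0 hv
    calc Kd v = 2 * Real.exp (-v^2/(2*σ^2))
          * (Real.exp (-d^2/(2*σ^2)) * Real.cosh (v*d/σ^2)) := by
          simp only [hKd]; exact aux_kernel_eq σ hσ d v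
      _ ≤ 2 * Real.exp (-v^2/(2*σ^2))
          * (Real.exp (-c^2/(2*σ^2)) * Real.cosh (v*c/σ^2)) :=
          mul_le_mul_of_nonneg_left (hGle v hv0 hv) (by positivity)
      _ = Kc v := by simp only [hKc]; exact (aux_kernel_eq σ hσ c v).symm
  -- pointwise nonnegativity
  have hptw : ∀ v, v ∈ Ioi (0:ℝ) → 0 ≤ (Kd v - Kc v) * (V v - V v₀) := by
    intro v hv
    rcases le_total v v₀ with h | h
    · have h1 : Kd v ≤ Kc v := hsign_le v (le_of_lt hv) h
      have h2 : V v ≤ V v₀ := hV_mono (Set.mem_Ici.mpr (le_of_lt (Set.mem_Ioi.mp hv))) hv₀0 h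
      nlinarith
    · have h1 : Kc v ≤ Kd v := hsign_ge v h
      have h2 : V v₀ ≤ V v := hV_mono hv₀0 (Set.mem_Ici.mpr (le_of_lt (Set.mem_Ioi.mp hv))) h
      exact mul_nonneg (by linarith) (by linarith)
  have h0 : 0 ≤ ∫ v in Ioi (0:ℝ), (Kd v - Kc v) * (V v - V v₀) :=
    setIntegral_nonneg measurableSet_Ioi hptw
  have hmass : ∫ v in Ioi (0:ℝ), Kc v = ∫ v in Ioi (0:ℝ), Kd v := by
    simp only [hKc, hKd]
    have h1 := aux_mass σ hσ c
    have h2 := aux_mass σ hσ d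
    rw [h1, h2]
  have hexpand : (fun v => (Kd v - Kc v) * (V v - V v₀))
      = fun v => (Kd v * V v - Kc v * V v) - (V v₀) * (Kd v - Kc v) := by
    funext v; ring
  have iA : ∫ v in Ioi (0:ℝ), (Kd v * V v - Kc v * V v)
      = (∫ v in Ioi (0:ℝ), Kd v * V v) - (∫ v in Ioi (0:ℝ), Kc v * V v) :=
    integral_sub hid' hic'
  have iB : ∫ v in Ioi (0:ℝ), (Kd v - Kc v)
      = (∫ v in Ioi (0:ℝ), Kd v) - (∫ v in Ioi (0:ℝ), Kc v) := integral_sub hkd hkc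
  have iC : ∫ v in Ioi (0:ℝ), (V v₀ * (Kd v - Kc v))
      = V v₀ * ∫ v in Ioi (0:ℝ), (Kd v - Kc v) := integral_const_mul _ _
  have iD : ∫ v in Ioi (0:ℝ), ((Kd v * V v - Kc v * V v) - V v₀ * (Kd v - Kc v))
      = (∫ v in Ioi (0:ℝ), (Kd v * V v - Kc v * V v))
        - ∫ v in Ioi (0:ℝ), (V v₀ * (Kd v - Kc v)) :=
    integral_sub (hid'.sub hic') ((hkd.sub hkc).const_mul (V v₀))
  have e1 : ∫ v in Ioi (0:ℝ), (Kd v - Kc v) * (V v - V v₀)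
      = (∫ v in Ioi (0:ℝ), Kd v * V v) - (∫ v in Ioi (0:ℝ), Kc v * V v)
        - (V v₀) * ((∫ v in Ioi (0:ℝ), Kd v) - (∫ v in Ioi (0:ℝ), Kc v)) := by
    rw [hexpand, iD, iA, iC, iB]
  have goal' : (∫ v in Ioi (0:ℝ), Kc v * V v) ≤ ∫ v in Ioi (0:ℝ), Kd v * V v := by
    rw [hmass] at e1
    rw [e1] at h0
    linarith
  exact goal'


/-- The one-step folded Bellman update `x ↦ x² + β·F(x)` of a non-decreasing non-negative value
function is non-decreasing on `[0, ∞)`. -/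
theorem stmt_13 (a σ : ℝ) (hσ : 0 < σ) (β : ℝ) (hβ : 0 ≤ β)
    (V : ℝ → ℝ) (hV_meas : Measurable V) (hV_nonneg : ∀ v, 0 ≤ v → 0 ≤ V v)
    (hV_mono : MonotoneOn V (Set.Ici 0))
    (hV_int : ∀ s : ℝ, IntegrableOn
      (fun v => (Real.exp (-(v - a * s) ^ 2 / (2 * σ ^ 2)) + Real.exp (-(v + a * s) ^ 2 / (2 * σ ^ 2))) * V v)
      (Set.Ioi 0)) :
    MonotoneOn (fun x => x ^ 2 + β *
      ∫ v in Set.Ioi (0:ℝ),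
        (Real.exp (-(v - a * x) ^ 2 / (2 * σ ^ 2)) + Real.exp (-(v + a * x) ^ 2 / (2 * σ ^ 2))) * V v)
      (Set.Ici 0) := by
  intro x hx y hy hxy
  simp only [Set.mem_Ici] at hx hy
  dsimp only
  have hax : ∀ (s v : ℝ),
      Real.exp (-(v - a * s) ^ 2 / (2 * σ ^ 2)) + Real.exp (-(v + a * s) ^ 2 / (2 * σ ^ 2))
        = Real.exp (-(v - |a| * s) ^ 2 / (2 * σ ^ 2))
          + Real.exp (-(v + |a| * s) ^ 2 / (2 * σ ^ 2)) := by
    intro s v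
    rcases abs_cases a with ⟨h, _⟩ | ⟨h, _⟩
    · rw [h]
    · rw [h]
      have e1 : (v - -a * s) ^ 2 = (v + a * s) ^ 2 := by ring
      have e2 : (v + -a * s) ^ 2 = (v - a * s) ^ 2 := by ring
      rw [e1, e2, add_comm]
  have hicx : IntegrableOn (fun v =>
      (Real.exp (-(v - |a| * x) ^ 2 / (2 * σ ^ 2))
        + Real.exp (-(v + |a| * x) ^ 2 / (2 * σ ^ 2))) * V v) (Set.Ioi 0) := by
    have h := hV_int x
    simp only [hax] at h
    exact h
  have hicy : IntegrableOn (fun v =>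
      (Real.exp (-(v - |a| * y) ^ 2 / (2 * σ ^ 2))
        + Real.exp (-(v + |a| * y) ^ 2 / (2 * σ ^ 2))) * V v) (Set.Ioi 0) := by
    have h := hV_int y
    simp only [hax] at h
    exact h
  have key := aux_key σ hσ V hV_mono (|a| * x) (|a| * y)
    (mul_nonneg (abs_nonneg a) hx) (mul_le_mul_of_nonneg_left hxy (abs_nonneg a)) hicx hicy
  simp only [hax]
  exact add_le_add (pow_le_pow_left₀ hx hxy 2) (mul_le_mul_of_nonneg_left key hβ)
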